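/- For any homogeneous polynomial P of degree m in d variables, the constant-coefficient differential operator P(∂) equals (-1)^m/m! · ad(F)^m applied to the multiplication operator by P, where F = -(1/2)(∂₁² + ⋯ + ∂_d²) and ad(F)(T) = FT - TF. -/

import Mathlib

open MvPolynomial Finset

noncomputable section

abbrev Pol (r : ℕ) : Type := MvPolynomial (Fin r) ℂ

/-- Multiplication operator by a polynomial. -/
def mulOp {r : ℕ} (p : Pol r) : Module.End ℂ (Pol r) := LinearMap.mulLeft ℂ p

/-- Partial derivative operator. -/
def pd {r : ℕ} (j : Fin r) : Module.End ℂ (Pol r) := (pderiv j).toLinearMap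

/-- The transposition operator `s_{ij}` swapping the variables `i` and `j`. -/
def swOp {r : ℕ} (i j : Fin r) : Module.End ℂ (Pol r) :=
  (rename ⇑(Equiv.swap i j) : Pol r →ₐ[ℂ] Pol r).toLinearMap

/-- The constant-coefficient differential operator `P(∂)` associated to a polynomial `P`:
substitute `∂_j` for `z_j` in each monomial. -/
def diffOp {d : ℕ} (p : Pol d) : Module.End ℂ (Pol d) :=
  ∑ c ∈ p.support, p.coeff c • ((List.finRange d).map (fun j => (pd j) ^ (c j))).prod

-- list helpers
lemma list_prod_map_mul' {M ι : Type*} [Monoid M] (u v : ι → M) :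
    ∀ (l : List ι), (∀ i ∈ l, ∀ i' ∈ l, Commute (v i) (u i')) →
      (l.map fun i => u i * v i).prod = (l.map u).prod * (l.map v).prod
  | [], _ => by simp
  | a :: l, h => by
      simp only [List.map_cons, List.prod_cons]
      rw [list_prod_map_mul' u v l
        (fun i hi i' hi' => h i (List.mem_cons_of_mem _ hi) i' (List.mem_cons_of_mem _ hi'))]
      have hc : Commute (v a) ((l.map u).prod) := by
        apply Commute.list_prod_right
        intro x hx
        obtain ⟨i', hi', rfl⟩ := List.mem_map.1 hx
        exact h a (List.mem_cons_self) i' (List.mem_cons_of_mem _ hi')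
      rw [mul_assoc, mul_assoc, ← mul_assoc (v a), hc.eq, mul_assoc]

lemma list_prod_map_eq_single {M ι : Type*} [Monoid M] (f : ι → M) (j : ι) :
    ∀ l : List ι, l.Nodup → j ∈ l → (∀ i ∈ l, i ≠ j → f i = 1) → (l.map f).prod = f j
  | [], _, hj, _ => by simp at hj
  | a :: l, hnd, hj, h1 => by
      simp only [List.map_cons, List.prod_cons]
      rcases List.mem_cons.1 hj with rfl | hj'
      · have : ∀ x ∈ l.map f, x = 1 := by
          intro x hx
          obtain ⟨i, hi, rfl⟩ := List.mem_map.1 hx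
          exact h1 i (List.mem_cons_of_mem _ hi)
            (fun hij => (List.nodup_cons.1 hnd).1 (hij ▸ hi))
        rw [List.prod_eq_one this, mul_one]
      · have ha : f a = 1 := h1 a (List.mem_cons_self)
          (fun hij => (List.nodup_cons.1 hnd).1 (hij ▸ hj'))
        rw [ha, one_mul]
        exact list_prod_map_eq_single f j l (List.nodup_cons.1 hnd).2 hj'
          (fun i hi => h1 i (List.mem_cons_of_mem _ hi))

variable {d : ℕ}

lemma pd_comm (i j : Fin d) : Commute (pd i) (pd j) := by
  by_cases h : i = j
  · subst h; rfl
  · apply MvPolynomial.linearMap_ext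
    intro s
    apply LinearMap.ext
    intro a
    simp only [LinearMap.comp_apply, Module.End.mul_apply, pd, Derivation.coeFn_coe,
      pderiv_monomial]
    rw [Finsupp.tsub_apply, Finsupp.tsub_apply, Finsupp.single_eq_of_ne' h,
      Finsupp.single_eq_of_ne' (Ne.symm h), tsub_right_comm]
    congr 1
    push_cast [Nat.sub_zero]
    ring

/-- The monomial differential operator `∂^c`. -/
def mono {d : ℕ} (c : Fin d →₀ ℕ) : Module.End ℂ (Pol d) :=
  ((List.finRange d).map (fun j => (pd j) ^ (c j))).prod

lemma diffOp_def (p : Pol d) : diffOp p = ∑ c ∈ p.support, p.coeff c • mono c := rfl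

lemma pd_commute_mono (j : Fin d) (c : Fin d →₀ ℕ) : Commute (pd j) (mono c) := by
  apply Commute.list_prod_right
  intro x hx
  obtain ⟨i, _, rfl⟩ := List.mem_map.1 hx
  exact (pd_comm j i).pow_right _

lemma mono_add (c c' : Fin d →₀ ℕ) : mono (c + c') = mono c * mono c' := by
  unfold mono
  have : ∀ j : Fin d, pd j ^ ((c + c') j) = pd j ^ (c j) * pd j ^ (c' j) := by
    intro j; rw [Finsupp.add_apply, pow_add]
  simp only [this]
  exact list_prod_map_mul' _ _ _
    (fun i _ i' _ => ((pd_comm i i').pow_pow _ _))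

lemma mono_zero : mono (0 : Fin d →₀ ℕ) = 1 := by
  unfold mono
  have : ∀ j : Fin d, pd j ^ ((0 : Fin d →₀ ℕ) j) = 1 := by intro j; simp
  simp only [this]
  apply List.prod_eq_one
  intro x hx
  obtain ⟨i, _, rfl⟩ := List.mem_map.1 hx
  rfl

lemma mono_single (j : Fin d) : mono (Finsupp.single j 1) = pd j := by
  unfold mono
  have := list_prod_map_eq_single (fun i : Fin d => pd i ^ ((Finsupp.single j 1) i)) j
    (List.finRange d) (List.nodup_finRange d) (List.mem_finRange j)
    (fun i _ hij => by simp [Finsupp.single_apply, (Ne.symm hij : ¬ j = i)])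
  rw [this]
  simp

lemma mono_succ (c : Fin d →₀ ℕ) (j : Fin d) : mono (c + Finsupp.single j 1) = mono c * pd j := by
  rw [mono_add, mono_single]

lemma diffOp_monomial (c : Fin d →₀ ℕ) (a : ℂ) : diffOp (monomial c a) = a • mono c := by
  by_cases h : a = 0
  · simp [h, diffOp_def]
  · rw [diffOp_def, support_monomial, if_neg h, Finset.sum_singleton, coeff_monomial, if_pos rfl]

lemma diffOp_sum_subset {p : Pol d} {s : Finset (Fin d →₀ ℕ)} (h : p.support ⊆ s) :
    diffOp p = ∑ c ∈ s, p.coeff c • mono c := by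
  rw [diffOp_def]
  apply Finset.sum_subset h
  intro c _ hc
  rw [notMem_support_iff.1 hc, zero_smul]

lemma diffOp_add (p q : Pol d) : diffOp (p + q) = diffOp p + diffOp q := by
  rw [diffOp_sum_subset (s := p.support ∪ q.support ∪ (p + q).support) (by
      intro c hc; simp [Finset.mem_union, hc]),
    diffOp_sum_subset (p := p) (s := p.support ∪ q.support ∪ (p + q).support) (by
      intro c hc; simp [Finset.mem_union, hc]),
    diffOp_sum_subset (p := q) (s := p.support ∪ q.support ∪ (p + q).support) (by
      intro c hc; simp [Finset.mem_union, hc]), ← Finset.sum_add_distrib]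
  apply Finset.sum_congr rfl
  intro c _
  rw [coeff_add, add_smul]

lemma diffOp_smul (a : ℂ) (p : Pol d) : diffOp (a • p) = a • diffOp p := by
  rw [diffOp_sum_subset (p := a • p) (s := p.support) (support_smul), diffOp_def, Finset.smul_sum]
  apply Finset.sum_congr rfl
  intro c _
  rw [coeff_smul, smul_eq_mul, mul_smul]

/-- `diffOp` as a linear map. -/
def diffL (d : ℕ) : Pol d →ₗ[ℂ] Module.End ℂ (Pol d) where
  toFun := diffOp
  map_add' := diffOp_add
  map_smul' := diffOp_smul

/-- The operator `F = -(1/2) Σ ∂ⱼ²`. -/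
def Fop (d : ℕ) : Module.End ℂ (Pol d) := -((1 / 2 : ℂ) • ∑ j : Fin d, pd j * pd j)

/-- `ad(F)` as a linear endomorphism of `End(Pol d)`. -/
def adL (d : ℕ) : Module.End ℂ (Module.End ℂ (Pol d)) :=
  LinearMap.mulLeft ℂ (Fop d) - LinearMap.mulRight ℂ (Fop d)

lemma adL_apply (T : Module.End ℂ (Pol d)) : adL d T = Fop d * T - T * Fop d := by
  simp [adL, LinearMap.sub_apply, LinearMap.mulLeft_apply, LinearMap.mulRight_apply]

lemma commute_F_pd (j : Fin d) : Commute (Fop d) (pd j) := by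
  have h1 : Commute (∑ i : Fin d, pd i * pd i) (pd j) :=
    Commute.sum_left _ _ _ (fun i _ => ((pd_comm i j).mul_left (pd_comm i j)))
  exact (h1.smul_left _).neg_left

lemma adL_pow_mul_left (n : ℕ) (X T : Module.End ℂ (Pol d)) (h : Commute (Fop d) X) :
    (adL d ^ n) (X * T) = X * (adL d ^ n) T := by
  induction n generalizing T with
  | zero => simp
  | succ n ih =>
    rw [pow_succ', Module.End.mul_apply, Module.End.mul_apply, ih, adL_apply, adL_apply,
      mul_sub, ← mul_assoc, h.eq, mul_assoc, mul_assoc]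

lemma adL_pow_mul_right (n : ℕ) (X T : Module.End ℂ (Pol d)) (h : Commute (Fop d) X) :
    (adL d ^ n) (T * X) = (adL d ^ n) T * X := by
  induction n generalizing T with
  | zero => simp
  | succ n ih =>
    rw [pow_succ', Module.End.mul_apply, Module.End.mul_apply, ih, adL_apply, adL_apply,
      sub_mul, ← mul_assoc, mul_assoc _ X (Fop d), ← h.eq, ← mul_assoc]

lemma pd_mul_mulOp (j : Fin d) (p : Pol d) :
    pd j * mulOp p = mulOp p * pd j + mulOp (pderiv j p) := by
  apply LinearMap.ext
  intro q
  simp only [Module.End.mul_apply, LinearMap.add_apply, mulOp, LinearMap.mulLeft_apply, pd,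
    Derivation.coeFn_coe, pderiv_mul]
  ring

lemma comm_pd2 (j : Fin d) (p : Pol d) :
    pd j * pd j * mulOp p - mulOp p * (pd j * pd j) =
      pd j * mulOp (pderiv j p) + mulOp (pderiv j p) * pd j := by
  have h := pd_mul_mulOp j p
  rw [mul_assoc, h, mul_add, ← mul_assoc, h]
  noncomm_ring

lemma half_neg {A : Type*} [Ring A] [Algebra ℂ A] (S M X : A) (h : S * M - M * S = X) :
    -((1 / 2 : ℂ) • S) * M - M * -((1 / 2 : ℂ) • S) = -((1 / 2 : ℂ) • X) := by
  rw [← h, neg_mul, mul_neg, sub_neg_eq_add, smul_mul_assoc, mul_smul_comm, smul_sub, neg_sub]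
  abel

lemma adL_mulOp (p : Pol d) :
    adL d (mulOp p) = -((1 / 2 : ℂ) •
      ∑ j : Fin d, (pd j * mulOp (pderiv j p) + mulOp (pderiv j p) * pd j)) := by
  have hS : (∑ j : Fin d, pd j * pd j) * mulOp p - mulOp p * (∑ j : Fin d, pd j * pd j) =
      ∑ j : Fin d, (pd j * mulOp (pderiv j p) + mulOp (pderiv j p) * pd j) := by
    rw [Finset.sum_mul, Finset.mul_sum, ← Finset.sum_sub_distrib]
    exact Finset.sum_congr rfl (fun j _ => comm_pd2 j p)
  rw [adL_apply]
  exact half_neg _ _ _ hS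

lemma sum_univ_eq_degree (c : Fin d →₀ ℕ) : ∑ j : Fin d, c j = Finsupp.degree c :=
  (Finset.sum_subset (Finset.subset_univ _)
    (fun _ _ hi => Finsupp.notMem_support_iff.1 hi)).symm

lemma degree_of_coeff_ne_zero {p : Pol d} {m : ℕ} (hp : p.IsHomogeneous m)
    {c : Fin d →₀ ℕ} (hc : coeff c p ≠ 0) : ∑ j : Fin d, c j = m := by
  rw [sum_univ_eq_degree, DFunLike.congr_fun (Finsupp.degree_eq_weight_one (R := ℕ) (σ := Fin d)) c]
  exact hp hc

lemma isHomogeneous_pderiv {p : Pol d} {n : ℕ} (hp : p.IsHomogeneous (n + 1)) (j : Fin d) :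
    (pderiv j p).IsHomogeneous n := by
  conv_lhs => rw [as_sum p]
  rw [map_sum]
  apply IsHomogeneous.sum
  intro c hc
  rw [pderiv_monomial]
  by_cases h : c j = 0
  · rw [h]
    simp only [Nat.cast_zero, mul_zero, map_zero]
    exact isHomogeneous_zero _ _ _
  · apply isHomogeneous_monomial
    have h1 : ∑ i : Fin d, c i = n + 1 :=
      degree_of_coeff_ne_zero hp (mem_support_iff.1 hc)
    rw [← sum_univ_eq_degree]
    have h2 : ∀ i : Fin d, ((c - Finsupp.single j 1 : Fin d →₀ ℕ)) i = c i - (Finsupp.single j 1) i := by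
      intro i; rw [Finsupp.tsub_apply]
    have h3 : ∑ i : Fin d, c i = c j + ∑ i ∈ Finset.univ.erase j, c i :=
      (Finset.add_sum_erase _ _ (Finset.mem_univ j)).symm
    have h4 : ∑ i : Fin d, ((c - Finsupp.single j 1 : Fin d →₀ ℕ)) i
        = (c j - 1) + ∑ i ∈ Finset.univ.erase j, c i := by
      rw [← Finset.add_sum_erase _ _ (Finset.mem_univ j), h2, Finsupp.single_eq_same]
      congr 1
      apply Finset.sum_congr rfl
      intro i hi
      rw [h2, Finsupp.single_eq_of_ne' (Ne.symm (Finset.ne_of_mem_erase hi)), Nat.sub_zero]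
    omega

lemma mono_sub_single_mul_pd (c : Fin d →₀ ℕ) (j : Fin d) :
    (c j : ℂ) • (mono (c - Finsupp.single j 1) * pd j) = (c j : ℂ) • mono c := by
  by_cases h : c j = 0
  · rw [h]; simp
  · congr 1
    rw [← mono_succ]
    congr 1
    ext i
    rw [Finsupp.add_apply, Finsupp.tsub_apply]
    by_cases hij : i = j
    · subst hij; rw [Finsupp.single_eq_same]; omega
    · rw [Finsupp.single_eq_of_ne' (Ne.symm hij)]; omega

lemma diffOp_sum {ι : Type*} (s : Finset ι) (f : ι → Pol d) :
    diffOp (∑ i ∈ s, f i) = ∑ i ∈ s, diffOp (f i) :=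
  map_sum (diffL d) f s

/-- Key combinatorial identity: `∑ⱼ (∂ⱼP)(∂) ∂ⱼ = m P(∂)` for `P` homogeneous of degree `m`. -/
lemma sum_diffOp_pderiv {m : ℕ} (p : Pol d) (hp : p.IsHomogeneous m) :
    ∑ j : Fin d, diffOp (pderiv j p) * pd j = (m : ℂ) • diffOp p := by
  have hj : ∀ j : Fin d, diffOp (pderiv j p) =
      ∑ c ∈ p.support, (coeff c p * (c j : ℂ)) • mono (c - Finsupp.single j 1) := by
    intro j
    conv_lhs => rw [as_sum p]
    rw [map_sum, diffOp_sum]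
    · apply Finset.sum_congr rfl
      intro c _
      rw [pderiv_monomial]
      exact diffOp_monomial _ _
  calc ∑ j : Fin d, diffOp (pderiv j p) * pd j
      = ∑ j : Fin d, ∑ c ∈ p.support,
          (coeff c p) • ((c j : ℂ) • (mono (c - Finsupp.single j 1) * pd j)) := by
        apply Finset.sum_congr rfl
        intro j _
        rw [hj j, Finset.sum_mul]
        apply Finset.sum_congr rfl
        intro c _
        rw [smul_mul_assoc, mul_smul]
    _ = ∑ c ∈ p.support, ∑ j : Fin d, (coeff c p) • ((c j : ℂ) • mono c) := by
        rw [Finset.sum_comm]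
        apply Finset.sum_congr rfl; intro c _
        apply Finset.sum_congr rfl; intro j _
        rw [mono_sub_single_mul_pd]
    _ = (m : ℂ) • diffOp p := by
        rw [diffOp_def, Finset.smul_sum]
        apply Finset.sum_congr rfl
        intro c hc
        rw [← Finset.smul_sum, ← Finset.sum_smul, ← Nat.cast_sum,
          degree_of_coeff_ne_zero hp (mem_support_iff.1 hc), smul_comm]

lemma eq_C_of_isHomogeneous_zero {p : Pol d} (hp : p.IsHomogeneous 0) :
    p = C (coeff 0 p) := by
  ext c
  by_cases h : c = 0
  · subst h; simp
  · rw [coeff_C, if_neg (fun h0 => h h0.symm)]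
    by_contra hc
    apply h
    have h1 := degree_of_coeff_ne_zero hp hc
    ext i
    have : c i ≤ ∑ j : Fin d, c j := Finset.single_le_sum (fun _ _ => Nat.zero_le _)
      (Finset.mem_univ i)
    simp only [Finsupp.coe_zero, Pi.zero_apply]
    omega

lemma mulOp_C (a : ℂ) : mulOp (C a : Pol d) = a • 1 := by
  apply LinearMap.ext
  intro q
  simp only [mulOp, LinearMap.mulLeft_apply, LinearMap.smul_apply, Module.End.one_apply]
  rw [C_mul', smul_eq_C_mul, C_mul']

lemma diffOp_C (a : ℂ) : diffOp (C a : Pol d) = a • 1 := by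
  rw [show (C a : Pol d) = monomial 0 a from rfl, diffOp_monomial, mono_zero]

lemma smul_collect {A : Type*} [AddCommGroup A] [Module ℂ A] (a b c : ℂ) (x : A) :
    -((a : ℂ) • (b • (c • x))) = (-(a * b * c)) • x := by
  rw [smul_smul, smul_smul, neg_smul, mul_assoc]

lemma adL_pow_mulOp : ∀ (m : ℕ) (p : Pol d), p.IsHomogeneous m →
    (adL d ^ m) (mulOp p) = (((-1 : ℂ) ^ m) * m.factorial) • diffOp p := by
  intro m
  induction m with
  | zero =>
    intro p hp
    have : ∃ a : ℂ, p = C a := ⟨_, eq_C_of_isHomogeneous_zero hp⟩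
    obtain ⟨a, rfl⟩ := this
    rw [pow_zero, mulOp_C, diffOp_C]
    simp
  | succ m ih =>
    intro p hp
    have hterm : ∀ j : Fin d,
        (adL d ^ m) (pd j * mulOp (pderiv j p) + mulOp (pderiv j p) * pd j)
          = ((-1 : ℂ) ^ m * m.factorial * 2) • (diffOp (pderiv j p) * pd j) := by
      intro j
      have hcomm : Commute (pd j) (diffOp (pderiv j p)) := by
        rw [diffOp_def]
        apply Commute.sum_right
        intro c _
        exact (pd_commute_mono j c).smul_right _
      rw [map_add, adL_pow_mul_left _ _ _ (commute_F_pd j),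
        adL_pow_mul_right _ _ _ (commute_F_pd j), ih _ (isHomogeneous_pderiv hp j),
        mul_smul_comm, smul_mul_assoc, hcomm.eq, ← add_smul]
      congr 1
      ring
    rw [pow_succ, Module.End.mul_apply, adL_mulOp, map_neg, map_smul, map_sum,
      Finset.sum_congr rfl (fun j _ => hterm j), ← Finset.smul_sum,
      sum_diffOp_pderiv p hp]
    have hsc : (-((1 / 2 : ℂ) * ((-1 : ℂ) ^ m * m.factorial * 2) * ((m + 1 : ℕ) : ℂ))) =
        ((-1 : ℂ) ^ (m + 1) * ((m + 1).factorial : ℂ)) := by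
      push_cast [Nat.factorial_succ]
      ring
    exact (smul_collect _ _ _ _).trans (by rw [hsc])

/-- For a homogeneous polynomial `P` of degree `m`,
`P(∂) = (-1)^m (1/m!) ad(F)^m (M_P)` where `F = -(1/2)∑ ∂ⱼ²`, `ad(F) T = F T - T F`,
and `M_P` is multiplication by `P`. -/
theorem diffOp_eq_adpow {d : ℕ} (m : ℕ) (p : Pol d) (hp : p.IsHomogeneous m) :
    letI F : Module.End ℂ (Pol d) := -((1 / 2 : ℂ) • ∑ j : Fin d, pd j * pd j)
    diffOp p = ((-1 : ℂ) ^ m / (m.factorial : ℂ)) •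
      (fun T : Module.End ℂ (Pol d) => F * T - T * F)^[m] (mulOp p) := by
  show diffOp p = ((-1 : ℂ) ^ m / (m.factorial : ℂ)) •
      (fun T : Module.End ℂ (Pol d) => Fop d * T - T * Fop d)^[m] (mulOp p)
  have hfun : (fun T : Module.End ℂ (Pol d) => Fop d * T - T * Fop d) = ⇑(adL d) :=
    funext fun T => (adL_apply T).symm
  rw [hfun, ← Module.End.pow_apply, adL_pow_mulOp m p hp, smul_smul]
  have hm : (m.factorial : ℂ) ≠ 0 := Nat.cast_ne_zero.2 (Nat.factorial_ne_zero m)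
  rw [div_mul_eq_mul_div, ← mul_assoc, ← pow_add, Even.neg_one_pow ⟨m, rfl⟩, one_mul,
    div_self hm, one_smul]
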